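/- Let τ > 0, and suppose h : ℝ³ → ℝ satisfies |h(y)| ≤ D (|y| s_τ(y))^{−2} ln(2+|y|) for |y| ≥ S (for some constants D, S > 0). Then h restricted to ℝ³ ∖ B_S belongs to L^q(ℝ³ ∖ B_S) for every q > 1. -/

import Mathlib

open MeasureTheory

noncomputable def sTau (τ : ℝ) (x : EuclideanSpace ℝ (Fin 3)) : ℝ := 1 + τ * (‖x‖ - x 0)

set_option maxHeartbeats 1000000

lemma key_bound (τ D S q : ℝ) (hτ : 0 < τ) (hD : 0 < D) (hS : 0 < S) (hq : 1 < q) :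
    ∃ C : ℝ, ∀ r t m : ℝ, S ≤ r → |t| ≤ r → 0 ≤ m → m ^ 2 ≤ r ^ 2 - t ^ 2 →
      (D * (r * (1 + τ * (r - t))) ^ (-(2:ℝ)) * Real.log (2 + r)) ^ q ≤
        C * (((1 + |t|) ^ ((q+1)/2))⁻¹ * ((1 + m) ^ (2*q))⁻¹) := by
  have hq0 : (0:ℝ) < q := by linarith
  obtain ⟨ε, hεdef⟩ : ∃ x : ℝ, x = (q-1)/(2*q) := ⟨_, rfl⟩
  have hε : 0 < ε := by rw [hεdef]; exact div_pos (by linarith) (by linarith)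
  have hε1 : ε < 1 := by
    rw [hεdef, div_lt_one (by linarith)]; linarith
  obtain ⟨K, hKdef⟩ : ∃ x : ℝ, x = ε⁻¹ * (1+2/S) ^ ε := ⟨_, rfl⟩
  have hK : 0 < K := by
    rw [hKdef]; exact mul_pos (inv_pos.2 hε) (Real.rpow_pos_of_pos (by positivity) _)
  obtain ⟨c₀, hc₀def⟩ : ∃ x : ℝ, x = min 1 S / 2 := ⟨_, rfl⟩
  have hc₀ : 0 < c₀ := by
    have := lt_min one_pos hS; rw [hc₀def]; linarith
  have hc01 : 0 < c₀ ^ (ε-1) := Real.rpow_pos_of_pos hc₀ _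
  have hc02 : 0 < c₀ ^ (ε-2) := Real.rpow_pos_of_pos hc₀ _
  obtain ⟨c, hcdef⟩ : ∃ x : ℝ, x = 8*D*K*(c₀ ^ (ε-1))/τ + D*K*(c₀ ^ (ε-2))*4 := ⟨_, rfl⟩
  have hc : 0 < c := by
    rw [hcdef]
    apply add_pos
    · exact div_pos (by positivity) hτ
    · positivity
  refine ⟨c ^ q, ?_⟩
  intro r t m hr ht hm hm2
  have hr0 : 0 < r := lt_of_lt_of_le hS hr
  have htr : t ≤ r := le_trans (le_abs_self t) ht
  obtain ⟨s, hsdef⟩ : ∃ x : ℝ, x = 1 + τ * (r - t) := ⟨_, rfl⟩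
  have hs1 : 1 ≤ s := by
    have : 0 ≤ τ * (r - t) := mul_nonneg hτ.le (by linarith)
    rw [hsdef]; linarith
  obtain ⟨A, hAdef⟩ : ∃ x : ℝ, x = r * s := ⟨_, rfl⟩
  have hs0 : 0 < s := by linarith
  have hA0 : 0 < A := by rw [hAdef]; exact mul_pos hr0 hs0
  have hrA : r ≤ A := by rw [hAdef]; exact le_mul_of_one_le_right hr0.le hs1
  obtain ⟨L, hLdef⟩ : ∃ x : ℝ, x = Real.log (2 + r) := ⟨_, rfl⟩
  have hL0 : 0 ≤ L := by rw [hLdef]; exact Real.log_nonneg (by linarith)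
  have hLK : L ≤ K * r ^ ε := by
    have h2r : (0:ℝ) < 2 + r := by linarith
    have e1 : L = ε⁻¹ * Real.log ((2+r) ^ ε) := by
      rw [hLdef, Real.log_rpow h2r]; field_simp
    have e2 : Real.log ((2+r) ^ ε) ≤ (2+r) ^ ε := by
      have := Real.log_le_sub_one_of_pos (Real.rpow_pos_of_pos h2r ε)
      linarith
    have e25 : 2 + r ≤ (1+2/S) * r := by
      have h' : 2 ≤ 2/S * r := by
        rw [div_mul_eq_mul_div, le_div_iff₀ hS]; linarith
      have h'' : (1+2/S) * r = r + 2/S * r := by ring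
      linarith
    have e3 : (2+r) ^ ε ≤ ((1+2/S) * r) ^ ε := Real.rpow_le_rpow h2r.le e25 hε.le
    have e4 : ((1+2/S) * r) ^ ε = (1+2/S) ^ ε * r ^ ε := Real.mul_rpow (by positivity) hr0.le
    calc L = ε⁻¹ * Real.log ((2+r) ^ ε) := e1
      _ ≤ ε⁻¹ * ((1+2/S) ^ ε * r ^ ε) := by
          apply mul_le_mul_of_nonneg_left _ (inv_nonneg.2 hε.le)
          exact le_trans e2 (e3.trans_eq e4)
      _ = K * r ^ ε := by rw [hKdef]; ring
  have habs : 0 ≤ |t| := abs_nonneg t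
  have hc₀r : c₀ * (1+|t|) ≤ r := by
    have h1 : min 1 S ≤ 1 := min_le_left _ _
    have h2 : min 1 S ≤ S := min_le_right _ _
    have h3 : 0 < min 1 S := lt_min one_pos hS
    have h4 : min 1 S * |t| ≤ |t| := mul_le_of_le_one_left habs h1
    have h6 : min 1 S * (1 + |t|) = min 1 S + min 1 S * |t| := by ring
    have h5 : min 1 S * (1 + |t|) ≤ S + |t| := by linarith
    have h7 : c₀ * (1+|t|) = min 1 S * (1 + |t|) / 2 := by rw [hc₀def]; ring
    linarith
  have hP1 : (0:ℝ) < 1 + |t| := by linarith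
  have hP11 : (1:ℝ) ≤ 1 + |t| := by linarith
  have hP2 : (0:ℝ) < 1 + m := by linarith
  have hc₀t : 0 < c₀ * (1+|t|) := mul_pos hc₀ hP1
  have hA2 : A ^ (-(2:ℝ)) = (A*A)⁻¹ := by
    rw [Real.rpow_neg hA0.le, show (2:ℝ) = ((2:ℕ):ℝ) by norm_num, Real.rpow_natCast, pow_two]
  have hm2inv : (1+m) ^ (-(2:ℝ)) = ((1+m)*(1+m))⁻¹ := by
    rw [Real.rpow_neg hP2.le, show (2:ℝ) = ((2:ℕ):ℝ) by norm_num, Real.rpow_natCast, pow_two]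
  have hrε1 : r ^ (ε-1) ≤ c₀ ^ (ε-1) * (1+|t|) ^ (ε-1) := by
    rw [← Real.mul_rpow hc₀.le hP1.le]
    exact Real.rpow_le_rpow_of_nonpos hc₀t hc₀r (by linarith)
  have hX0 : 0 ≤ D * A ^ (-(2:ℝ)) * L :=
    mul_nonneg (mul_nonneg hD.le (Real.rpow_nonneg hA0.le _)) hL0
  have main : D * A ^ (-(2:ℝ)) * L ≤ c * ((1+|t|) ^ (ε-1) * (1+m) ^ (-(2:ℝ))) := by
    rcases le_or_gt m 1 with hm1 | hm1
    · -- case B : m ≤ 1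
      have hstep1 : A ^ (-(2:ℝ)) ≤ (r*r)⁻¹ := by
        rw [hA2]
        exact inv_anti₀ (by positivity) (mul_le_mul hrA hrA hr0.le hA0.le)
      have hXb : D * A ^ (-(2:ℝ)) * L ≤ D * (r*r)⁻¹ * (K * r ^ ε) := by
        apply mul_le_mul _ hLK hL0 (by positivity)
        exact mul_le_mul_of_nonneg_left hstep1 hD.le
      have hrr : r * r = r ^ (2:ℝ) := by
        rw [show (2:ℝ) = ((2:ℕ):ℝ) by norm_num, Real.rpow_natCast]
        ring
      have hre : (r*r)⁻¹ * r ^ ε = r ^ (ε-2) := by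
        rw [hrr, ← Real.rpow_neg hr0.le, ← Real.rpow_add hr0]
        ring_nf
      have hrε2 : r ^ (ε-2) ≤ c₀ ^ (ε-2) * (1+|t|) ^ (ε-2) := by
        rw [← Real.mul_rpow hc₀.le hP1.le]
        exact Real.rpow_le_rpow_of_nonpos hc₀t hc₀r (by linarith)
      have hexp : (1+|t|) ^ (ε-2) ≤ (1+|t|) ^ (ε-1) :=
        Real.rpow_le_rpow_of_exponent_le hP11 (by linarith)
      have hmlb : (1:ℝ) ≤ 4 * (1+m) ^ (-(2:ℝ)) := by
        have hp : (0:ℝ) < (1+m)*(1+m) := by positivity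
        rw [hm2inv, ← div_eq_mul_inv, le_div_iff₀ hp]
        have hmm : m*m ≤ 1 := mul_le_one₀ hm1 hm hm1
        have e : 1*((1+m)*(1+m)) = 1 + 2*m + m*m := by ring
        linarith
      calc D * A ^ (-(2:ℝ)) * L ≤ D * (r*r)⁻¹ * (K * r ^ ε) := hXb
        _ = D * K * ((r*r)⁻¹ * r ^ ε) := by ring
        _ = D * K * r ^ (ε-2) := by rw [hre]
        _ ≤ D * K * (c₀ ^ (ε-2) * (1+|t|) ^ (ε-1)) := by
            apply mul_le_mul_of_nonneg_left _ (by positivity)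
            exact le_trans hrε2 (mul_le_mul_of_nonneg_left hexp hc02.le)
        _ ≤ D * K * (c₀ ^ (ε-2) * (1+|t|) ^ (ε-1)) * (4 * (1+m) ^ (-(2:ℝ))) := by
            nth_rewrite 1 [← mul_one (D * K * (c₀ ^ (ε-2) * (1+|t|) ^ (ε-1)))]
            apply mul_le_mul_of_nonneg_left hmlb
            have := Real.rpow_pos_of_pos hP1 (ε-1)
            positivity
        _ = (D*K*(c₀ ^ (ε-2))*4) * ((1+|t|) ^ (ε-1) * (1+m) ^ (-(2:ℝ))) := by ring
        _ ≤ c * ((1+|t|) ^ (ε-1) * (1+m) ^ (-(2:ℝ))) := by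
            apply mul_le_mul_of_nonneg_right
            · rw [hcdef]
              have : 0 < 8*D*K*(c₀ ^ (ε-1))/τ := div_pos (by positivity) hτ
              linarith
            · have h1 := Real.rpow_nonneg hP1.le (ε-1)
              have h2 := Real.rpow_nonneg hP2.le (-(2:ℝ))
              positivity
    · -- case A : 1 < m
      have hm0 : 0 < m := lt_trans one_pos hm1
      have key1 : m ^ 2 ≤ 2 * (r * (r - t)) := by
        have e : 2 * (r * (r - t)) - (r ^ 2 - t ^ 2) = (r - t) ^ 2 := by ring
        have := sq_nonneg (r - t)
        linarith
      have h5 : τ * m ^ 2 / 2 ≤ A := by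
        have h6 : τ * m ^ 2 ≤ τ * (2 * (r * (r-t))) := mul_le_mul_of_nonneg_left key1 hτ.le
        have h7 : A = r + τ * (r * (r - t)) := by rw [hAdef, hsdef]; ring
        have h8 : τ * (2 * (r * (r-t))) = 2 * (τ * (r * (r - t))) := by ring
        linarith
      have hAA : (τ * m ^ 2 / 2) * r ≤ A * A := mul_le_mul h5 hrA hr0.le hA0.le
      have hstep1 : A ^ (-(2:ℝ)) ≤ ((τ * m ^ 2 / 2) * r)⁻¹ := by
        rw [hA2]
        exact inv_anti₀ (by positivity) hAA
      have hXb : D * A ^ (-(2:ℝ)) * L ≤ D * ((τ * m ^ 2 / 2) * r)⁻¹ * (K * r ^ ε) := by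
        apply mul_le_mul _ hLK hL0 (by positivity)
        exact mul_le_mul_of_nonneg_left hstep1 hD.le
      have hsplit : ((τ * m ^ 2 / 2) * r)⁻¹ = (2/τ) * (m ^ 2)⁻¹ * r⁻¹ := by
        field_simp
      have hminv : (m ^ 2)⁻¹ ≤ 4 * ((1+m)*(1+m))⁻¹ := by
        rw [inv_eq_one_div, show (4:ℝ) * ((1+m)*(1+m))⁻¹ = 4 / ((1+m)*(1+m)) by
          rw [div_eq_mul_inv], div_le_div_iff₀ (by positivity) (by positivity)]
        have h2m : 1+m ≤ 2*m := by linarith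
        have hmul : (1+m)*(1+m) ≤ (2*m)*(2*m) :=
          mul_le_mul h2m h2m (by linarith) (by linarith)
        have e : (2*m)*(2*m) = 4*m^2 := by ring
        linarith
      have hre : r⁻¹ * r ^ ε = r ^ (ε-1) := by
        rw [show r⁻¹ = r ^ (-(1:ℝ)) by rw [Real.rpow_neg_one], ← Real.rpow_add hr0]
        ring_nf
      calc D * A ^ (-(2:ℝ)) * L ≤ D * ((τ * m ^ 2 / 2) * r)⁻¹ * (K * r ^ ε) := hXb
        _ = D * K * ((2/τ) * (m ^ 2)⁻¹) * (r⁻¹ * r ^ ε) := by rw [hsplit]; ring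
        _ = D * K * ((2/τ) * (m ^ 2)⁻¹) * r ^ (ε-1) := by rw [hre]
        _ ≤ D * K * ((2/τ) * (4 * ((1+m)*(1+m))⁻¹)) * (c₀ ^ (ε-1) * (1+|t|) ^ (ε-1)) := by
            apply mul_le_mul
            · apply mul_le_mul_of_nonneg_left _ (by positivity)
              apply mul_le_mul_of_nonneg_left hminv (by positivity)
            · exact hrε1
            · exact Real.rpow_nonneg hr0.le _
            · positivity
        _ = (8*D*K*(c₀ ^ (ε-1))/τ) * ((1+|t|) ^ (ε-1) * (1+m) ^ (-(2:ℝ))) := by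
            rw [hm2inv]; ring
        _ ≤ c * ((1+|t|) ^ (ε-1) * (1+m) ^ (-(2:ℝ))) := by
            apply mul_le_mul_of_nonneg_right
            · rw [hcdef]
              have hpos : 0 < D*K*(c₀ ^ (ε-2))*4 :=
                mul_pos (mul_pos (mul_pos hD hK) hc02) (by norm_num)
              linarith
            · have h1 := Real.rpow_nonneg hP1.le (ε-1)
              have h2 := Real.rpow_nonneg hP2.le (-(2:ℝ))
              positivity
  -- raise to power q
  have goal_eq : D * (r * (1 + τ * (r - t))) ^ (-(2:ℝ)) * Real.log (2 + r)
      = D * A ^ (-(2:ℝ)) * L := by rw [hAdef, hsdef, hLdef]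
  rw [goal_eq]
  have final := Real.rpow_le_rpow hX0 main hq0.le
  refine le_trans final ?_
  have e1 : (c * ((1+|t|) ^ (ε-1) * (1+m) ^ (-(2:ℝ)))) ^ q
      = c ^ q * (((1+|t|) ^ (ε-1)) ^ q * ((1+m) ^ (-(2:ℝ))) ^ q) := by
    rw [Real.mul_rpow hc.le (by positivity), Real.mul_rpow (by positivity) (by positivity)]
  rw [e1]
  have e2 : ((1+|t|) ^ (ε-1)) ^ q = ((1+|t|) ^ ((q+1)/2))⁻¹ := by
    rw [← Real.rpow_mul hP1.le]
    have : (ε-1) * q = -((q+1)/2) := by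
      rw [hεdef]; field_simp; ring
    rw [this, Real.rpow_neg hP1.le]
  have e3 : ((1+m) ^ (-(2:ℝ))) ^ q = ((1+m) ^ (2*q))⁻¹ := by
    rw [← Real.rpow_mul hP2.le]
    have : (-(2:ℝ)) * q = -(2*q) := by ring
    rw [this, Real.rpow_neg hP2.le]
  rw [e2, e3]

theorem gradient_remainder_memLp (τ D S : ℝ) (hτ : 0 < τ) (hD : 0 < D) (hS : 0 < S)
    (h : EuclideanSpace ℝ (Fin 3) → ℝ) (hh : Measurable h)
    (hbound : ∀ y : EuclideanSpace ℝ (Fin 3), S ≤ ‖y‖ →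
      |h y| ≤ D * (‖y‖ * sTau τ y) ^ (-(2:ℝ)) * Real.log (2 + ‖y‖))
    (q : ℝ) (hq : 1 < q) :
    MemLp h (ENNReal.ofReal q)
      (volume.restrict {y : EuclideanSpace ℝ (Fin 3) | S ≤ ‖y‖}) := by
  have hq0 : (0:ℝ) < q := by linarith
  obtain ⟨C, hkey⟩ := key_bound τ D S q hτ hD hS hq
  set μr := volume.restrict {y : EuclideanSpace ℝ (Fin 3) | S ≤ ‖y‖} with hμr
  -- the equivalences
  set e1 := (MeasurableEquiv.toLp 2 (Fin 3 → ℝ)).symm with he1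
  set e2 := MeasurableEquiv.piFinSuccAbove (fun _ : Fin 3 => ℝ) 0 with he2
  -- the dominating function
  set F : ℝ × (Fin 2 → ℝ) → ℝ :=
    fun z => C * ((1 + ‖z.1‖) ^ (-((q+1)/2)) * (1 + ‖z.2‖) ^ (-(2*q))) with hF
  have i1 : Integrable (fun t : ℝ => (1 + ‖t‖) ^ (-((q+1)/2))) volume := by
    apply integrable_one_add_norm
    rw [Module.finrank_self]
    norm_num
    linarith
  have i2 : Integrable (fun v : Fin 2 → ℝ => (1 + ‖v‖) ^ (-(2*q))) volume := by
    apply integrable_one_add_norm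
    rw [Module.finrank_pi]
    norm_num
    linarith
  have hFint : Integrable F volume := by
    have hprod := i1.mul_prod i2
    rw [← Measure.volume_eq_prod] at hprod
    exact hprod.const_mul C
  -- transfer to EuclideanSpace
  have mp : MeasurePreserving (⇑e2 ∘ ⇑e1) volume volume :=
    (volume_preserving_piFinSuccAbove (fun _ : Fin 3 => ℝ) 0).comp
      (EuclideanSpace.volume_preserving_symm_measurableEquiv_toLp (Fin 3))
  have emb : MeasurableEmbedding (⇑e2 ∘ ⇑e1) :=
    e2.measurableEmbedding.comp e1.measurableEmbedding
  have hMvol : Integrable (fun y : EuclideanSpace ℝ (Fin 3) => F (e2 (e1 y))) volume := by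
    have := (mp.integrable_comp_emb emb).2 hFint
    exact this
  have hMint : Integrable (fun y : EuclideanSpace ℝ (Fin 3) => F (e2 (e1 y))) μr := hMvol.restrict
  -- measurability
  have hmeasset : MeasurableSet {y : EuclideanSpace ℝ (Fin 3) | S ≤ ‖y‖} :=
    (isClosed_le continuous_const continuous_norm).measurableSet
  have hmeas2 : Measurable (fun y : EuclideanSpace ℝ (Fin 3) => ‖h y‖ ^ q) := by
    exact (Real.continuous_rpow_const hq0.le).measurable.comp hh.norm
  have haesm : AEStronglyMeasurable (fun y : EuclideanSpace ℝ (Fin 3) => ‖h y‖ ^ q) μr :=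
    hmeas2.aestronglyMeasurable
  -- pointwise bound
  have hptwise : ∀ y : EuclideanSpace ℝ (Fin 3), S ≤ ‖y‖ → ‖h y‖ ^ q ≤ F (e2 (e1 y)) := by
    intro y hy
    have hy0 : 0 < ‖y‖ := lt_of_lt_of_le hS hy
    -- coordinates
    have hc1 : (e2 (e1 y)).1 = y 0 := rfl
    have hc2 : ∀ j : Fin 2, (e2 (e1 y)).2 j = y (Fin.succAbove 0 j) := fun j => rfl
    set m := ‖(e2 (e1 y)).2‖ with hm
    have hm0 : 0 ≤ m := norm_nonneg _
    have hsum : ‖y‖ ^ 2 = (y 0) ^ 2 + ((y 1) ^ 2 + (y 2) ^ 2) := by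
      rw [EuclideanSpace.norm_eq, Real.sq_sqrt (by positivity)]
      simp [Fin.sum_univ_three, sq_abs]
      ring
    have ht : |y 0| ≤ ‖y‖ := by
      rw [← Real.sqrt_sq_eq_abs, ← Real.sqrt_sq hy0.le]
      apply Real.sqrt_le_sqrt
      nlinarith [sq_nonneg (y 1), sq_nonneg (y 2)]
    have hmle : m ≤ Real.sqrt ((y 1) ^ 2 + (y 2) ^ 2) := by
      rw [hm]
      apply (pi_norm_le_iff_of_nonneg (Real.sqrt_nonneg _)).2
      rw [Fin.forall_fin_two]
      constructor
      · rw [hc2 0, show Fin.succAbove 0 0 = (1 : Fin 3) from rfl,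
          Real.norm_eq_abs, ← Real.sqrt_sq_eq_abs]
        apply Real.sqrt_le_sqrt
        nlinarith [sq_nonneg (y 2)]
      · rw [hc2 1, show Fin.succAbove 0 1 = (2 : Fin 3) from rfl,
          Real.norm_eq_abs, ← Real.sqrt_sq_eq_abs]
        apply Real.sqrt_le_sqrt
        nlinarith [sq_nonneg (y 1)]
    have hm2 : m ^ 2 ≤ ‖y‖ ^ 2 - (y 0) ^ 2 := by
      have := pow_le_pow_left₀ hm0 hmle 2
      rw [Real.sq_sqrt (by positivity)] at this
      linarith
    have step1 : ‖h y‖ ^ q ≤ (D * (‖y‖ * (1 + τ * (‖y‖ - y 0))) ^ (-(2:ℝ)) *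
        Real.log (2 + ‖y‖)) ^ q := by
      apply Real.rpow_le_rpow (norm_nonneg _) _ hq0.le
      rw [Real.norm_eq_abs]
      simpa [sTau] using hbound y hy
    have step2 := hkey ‖y‖ (y 0) m hy ht hm0 hm2
    refine le_trans step1 (le_trans step2 ?_)
    rw [hF]
    simp only [hc1, Real.norm_eq_abs]
    rw [Real.rpow_neg (by positivity), Real.rpow_neg (by positivity)]
  -- integrability of ‖h‖^q
  have hint : Integrable (fun y : EuclideanSpace ℝ (Fin 3) => ‖h y‖ ^ q) μr := by
    apply Integrable.mono' hMint haesm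
    filter_upwards [ae_restrict_mem hmeasset] with y hy
    rw [Real.norm_of_nonneg (Real.rpow_nonneg (norm_nonneg _) q)]
    exact hptwise y hy
  -- conclude
  refine ⟨hh.aestronglyMeasurable, ?_⟩
  have h1 : MemLp (fun y : EuclideanSpace ℝ (Fin 3) => ‖h y‖ ^ q) 1 μr := memLp_one_iff_integrable.2 hint
  have h2 := h1.2
  rw [eLpNorm_norm_rpow h hq0, one_mul] at h2
  exact (ENNReal.rpow_lt_top_iff_of_pos hq0).1 h2
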